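/- Let k : ℕ → ℕ be a strictly increasing sequence with k₁ = 1, k₂ = 2, and let b_i be a sequence of functions satisfying the recursion b_{i+1}(x) = b_i(x) + (1 + b_i(k_i))·(frac(x/k_i) - (k_{i+1}/k_i)·frac(x/k_{i+1})) with b₂(x) = frac(x) - 2·frac(x/2), and suppose b_{i+1}(k_i) = -1 for all i ≥ 2. Then the following are equivalent: (a) ∑_{j=1}^{i} μ(k_j)/k_j = (1 + b_i(k_i))/k_i for all i ≥ 2; (b) b_i(x) = ∑_{j=1}^{i-1} μ(k_j)·frac(x/k_j) - k_i·(∑_{j=1}^{i-1} μ(k_j)/k_j)·frac(x/k_i) for all i ≥ 2 and all x ≥ 1. -/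

import Mathlib

open ArithmeticFunction ArithmeticFunction.Moebius in
theorem stmt_7 (k : ℕ → ℕ) (b : ℕ → ℝ → ℝ)
    (hmono : StrictMono k) (hk1 : k 1 = 1) (hk2 : k 2 = 2)
    (hb2 : ∀ x : ℝ, b 2 x = Int.fract x - 2 * Int.fract (x / 2))
    (hbrec : ∀ i ≥ 2, ∀ x : ℝ, b (i + 1) x =
      b i x + (1 + b i (k i)) *
        (Int.fract (x / (k i : ℝ)) - ((k (i + 1) : ℝ) / (k i : ℝ)) * Int.fract (x / (k (i + 1) : ℝ))))
    (hneg1 : ∀ i ≥ 2, b (i + 1) (k i) = -1) :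
    ((∀ i ≥ 2, ∑ j ∈ Finset.Icc 1 i, (μ (k j) : ℝ) / (k j : ℝ) = (1 + b i (k i)) / (k i : ℝ)) ↔
     (∀ i ≥ 2, ∀ x : ℝ, 1 ≤ x →
        b i x = ∑ j ∈ Finset.Icc 1 (i - 1), (μ (k j) : ℝ) * Int.fract (x / (k j : ℝ)) -
          (k i : ℝ) * (∑ j ∈ Finset.Icc 1 (i - 1), (μ (k j) : ℝ) / (k j : ℝ)) *
            Int.fract (x / (k i : ℝ)))) := by
  have hk_pos : ∀ i, 1 ≤ i → 1 ≤ k i := fun i hi => hk1 ▸ hmono.monotone hi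
  have hkR : ∀ i, 1 ≤ i → (1:ℝ) ≤ (k i : ℝ) := fun i hi => by exact_mod_cast hk_pos i hi
  have hkpos : ∀ i, 1 ≤ i → (0:ℝ) < (k i : ℝ) := fun i hi => by linarith [hkR i hi]
  have hsum : ∀ (i : ℕ), 2 ≤ i → ∀ f : ℕ → ℝ,
      ∑ j ∈ Finset.Icc 1 i, f j = ∑ j ∈ Finset.Icc 1 (i-1), f j + f i := by
    intro i hi f
    obtain ⟨n, rfl⟩ : ∃ n, i = n + 1 := ⟨i-1, by omega⟩
    rw [Finset.sum_Icc_succ_top (by omega : 1 ≤ n + 1)]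
    simp
  constructor
  · intro ha i hi
    induction i, hi using Nat.le_induction with
    | base =>
      intro x hx
      rw [hb2 x]
      norm_num [Finset.Icc_self, hk1, hk2]
    | succ i hi ih =>
      intro x hx
      have hki : (k i : ℝ) ≠ 0 := (hkpos i (by omega)).ne'
      have hki1 : (k (i+1) : ℝ) ≠ 0 := (hkpos (i+1) (by omega)).ne'
      have ha' := ha i hi
      rw [hsum i hi (fun j => (μ (k j) : ℝ) / (k j : ℝ))] at ha'
      have hb' : 1 + b i (k i) = (k i : ℝ) *
          (∑ j ∈ Finset.Icc 1 (i-1), (μ (k j) : ℝ) / (k j : ℝ) + (μ (k i) : ℝ) / (k i : ℝ)) := by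
        rw [eq_div_iff hki] at ha'
        linear_combination -ha'
      rw [hbrec i hi x, ih x hx, hb']
      simp only [Nat.add_sub_cancel]
      rw [hsum i hi (fun j => (μ (k j) : ℝ) * Int.fract (x / (k j : ℝ))),
          hsum i hi (fun j => (μ (k j) : ℝ) / (k j : ℝ))]
      field_simp
      ring
  · intro hb' i hi
    have hki : (0:ℝ) < (k i : ℝ) := hkpos i (by omega)
    have hki1 : (0:ℝ) < (k (i+1) : ℝ) := hkpos (i+1) (by omega)
    have hlt : (k i : ℝ) < (k (i+1) : ℝ) := by exact_mod_cast hmono (Nat.lt_succ_self i)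
    have h1 := hb' i hi (k i) (hkR i (by omega))
    have h2 := hb' (i+1) (by omega) (k i) (hkR i (by omega))
    rw [div_self hki.ne', Int.fract_one, mul_zero, sub_zero] at h1
    simp only [Nat.add_sub_cancel] at h2
    rw [hsum i hi (fun j => (μ (k j) : ℝ) * Int.fract ((k i : ℝ) / (k j : ℝ)))] at h2
    rw [div_self hki.ne', Int.fract_one, mul_zero, add_zero,
        Int.fract_eq_self.2 ⟨by positivity, by rw [div_lt_one hki1]; exact hlt⟩,
        hneg1 i hi] at h2
    have h3 : (k (i+1) : ℝ) * (∑ j ∈ Finset.Icc 1 i, (μ (k j) : ℝ) / (k j : ℝ)) *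
        ((k i : ℝ) / (k (i+1) : ℝ)) =
        (k i : ℝ) * (∑ j ∈ Finset.Icc 1 i, (μ (k j) : ℝ) / (k j : ℝ)) := by
      field_simp
    rw [h3] at h2
    rw [h1, eq_div_iff hki.ne']
    linarith [h2]
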